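/- For $n\in\{2,4,6,\dots\}$ and $q_i=\frac{i}{n+1}$, the function $g(x)=\frac{1}{2}+\frac{2}{n+1}\sum_{i=1}^{n}(-1)^{i+1}\max\{(-1)^{i+1}(x-q_i),0\}$ satisfies $g(x)=x-\frac{(-1)^i}{n+1}\big(x-\frac{i+1/2}{n+1}\big)$ for all $i\in\{0,\dots,n\}$ and all $x\in[q_i,q_{i+1}]$ (with $q_0=0$, $q_{n+1}=1$). -/

import Mathlib

lemma evens_sum (M : ℕ) (x c : ℝ) :
    ∑ j ∈ Finset.Icc 1 (2 * M), (if j % 2 = 0 then x - (j : ℝ) / c else 0)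
      = M * x - (M * (M + 1)) / c := by
  induction M with
  | zero => simp
  | succ M ih =>
    rw [show 2 * (M + 1) = (2 * M + 1) + 1 by ring,
      Finset.sum_Icc_succ_top (by omega), Finset.sum_Icc_succ_top (by omega), ih]
    have h1 : (2 * M + 1) % 2 = 1 := by omega
    have h2 : (2 * M + 1 + 1) % 2 = 0 := by omega
    simp only [h1, h2]
    norm_num
    ring

lemma core_sum (n : ℕ) (hn : Even n) (i : ℕ) (hi : i ≤ n) (x : ℝ) :
    ∑ j ∈ Finset.Icc 1 n,
        (if (j % 2 = 1 ∧ j ≤ i) ∨ (j % 2 = 0 ∧ i < j) then x - (j : ℝ) / ((n : ℝ) + 1) else 0)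
      = ((n : ℝ) + 1) / 2 *
          (x - 1 / 2 - (-1 : ℝ) ^ i / ((n : ℝ) + 1) * (x - ((i : ℝ) + 1 / 2) / ((n : ℝ) + 1))) := by
  have hc : ((n : ℝ) + 1) ≠ 0 := by positivity
  induction i with
  | zero =>
    obtain ⟨M, hM⟩ := hn
    have hn2 : n = 2 * M := by omega
    subst hn2
    rw [Finset.sum_congr rfl (fun j hj => ?_), evens_sum M x ((2 * M : ℕ) + 1)]
    · field_simp
      push_cast
      ring
    · have hj1 : 1 ≤ j := (Finset.mem_Icc.mp hj).1
      have : ((j % 2 = 1 ∧ j ≤ 0) ∨ (j % 2 = 0 ∧ 0 < j)) ↔ (j % 2 = 0) := by omega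
      rw [if_congr this rfl rfl]
  | succ i ih =>
    have hi' : i ≤ n := Nat.le_of_succ_le hi
    set δ : ℝ := (-1 : ℝ) ^ i * (x - ((i : ℝ) + 1) / ((n : ℝ) + 1)) with hδ
    have hmem : i + 1 ∈ Finset.Icc 1 n := by simp; omega
    have step : ∀ j ∈ Finset.Icc 1 n,
        (if (j % 2 = 1 ∧ j ≤ i + 1) ∨ (j % 2 = 0 ∧ i + 1 < j) then x - (j : ℝ) / ((n : ℝ) + 1) else 0)
          = (if (j % 2 = 1 ∧ j ≤ i) ∨ (j % 2 = 0 ∧ i < j) then x - (j : ℝ) / ((n : ℝ) + 1) else 0)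
            + (if j = i + 1 then δ else 0) := by
      intro j hj
      by_cases hji : j = i + 1
      · subst hji
        rcases Nat.even_or_odd i with he | ho
        · have h1 : (i + 1) % 2 = 1 := by
            have := Nat.even_iff.mp he; omega
          have c1 : ((i + 1) % 2 = 1 ∧ i + 1 ≤ i + 1) ∨ ((i + 1) % 2 = 0 ∧ i + 1 < i + 1) := by
            omega
          have c2 : ¬ (((i + 1) % 2 = 1 ∧ i + 1 ≤ i) ∨ ((i + 1) % 2 = 0 ∧ i < i + 1)) := by omega
          rw [if_pos c1, if_neg c2, if_pos rfl, hδ, he.neg_one_pow]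
          push_cast
          ring
        · have h0 : (i + 1) % 2 = 0 := by
            have := Nat.odd_iff.mp ho; omega
          have c1 : ¬ (((i + 1) % 2 = 1 ∧ i + 1 ≤ i + 1) ∨ ((i + 1) % 2 = 0 ∧ i + 1 < i + 1)) := by
            omega
          have c2 : (((i + 1) % 2 = 1 ∧ i + 1 ≤ i) ∨ ((i + 1) % 2 = 0 ∧ i < i + 1)) := by omega
          rw [if_neg c1, if_pos c2, if_pos rfl, hδ, ho.neg_one_pow]
          push_cast
          ring
      · have : ((j % 2 = 1 ∧ j ≤ i + 1) ∨ (j % 2 = 0 ∧ i + 1 < j)) ↔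
            ((j % 2 = 1 ∧ j ≤ i) ∨ (j % 2 = 0 ∧ i < j)) := by omega
        rw [if_congr this rfl rfl, if_neg hji, add_zero]
    rw [Finset.sum_congr rfl step, Finset.sum_add_distrib, Finset.sum_ite_eq' _ (i + 1),
      if_pos hmem, ih hi', hδ]
    push_cast
    field_simp
    ring

theorem saddle_realization_as_relu_net (n : ℕ) (hn2 : 2 ≤ n) (hne : Even n)
    (q : ℕ → ℝ) (hq : ∀ i, q i = (i : ℝ) / (n + 1)) :
    ∀ i ≤ n, ∀ x ∈ Set.Icc (q i) (q (i + 1)),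
      (1 / 2 + 2 / ((n : ℝ) + 1) *
          ∑ j ∈ Finset.Icc 1 n, (-1 : ℝ) ^ (j + 1) * max ((-1 : ℝ) ^ (j + 1) * (x - q j)) 0)
        = x - (-1 : ℝ) ^ i / (n + 1) * (x - ((i : ℝ) + 1 / 2) / (n + 1)) := by
  intro i hi x hx
  obtain ⟨hx1, hx2⟩ := hx
  have hc : ((n : ℝ) + 1) ≠ 0 := by positivity
  have hcpos : (0 : ℝ) < (n : ℝ) + 1 := by positivity
  have termwise : ∀ j ∈ Finset.Icc 1 n,
      (-1 : ℝ) ^ (j + 1) * max ((-1 : ℝ) ^ (j + 1) * (x - q j)) 0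
        = (if (j % 2 = 1 ∧ j ≤ i) ∨ (j % 2 = 0 ∧ i < j) then x - (j : ℝ) / ((n : ℝ) + 1) else 0) := by
    intro j hj
    have hqj : q j = (j : ℝ) / ((n : ℝ) + 1) := hq j
    by_cases hji : j ≤ i
    · -- q j ≤ q i ≤ x
      have hle : q j ≤ x := by
        refine le_trans ?_ hx1
        rw [hqj, hq i]
        gcongr
      rcases Nat.even_or_odd j with he | ho
      · -- j even: coefficient -1, max(q j - x, 0) = 0
        have h0 : j % 2 = 0 := Nat.even_iff.mp he
        have hpow : (-1 : ℝ) ^ (j + 1) = -1 := (he.add_one).neg_one_pow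
        rw [hpow]
        have hmax : max (-1 * (x - q j)) 0 = 0 :=
          max_eq_right (by linarith)
        have hcond : ¬ ((j % 2 = 1 ∧ j ≤ i) ∨ (j % 2 = 0 ∧ i < j)) := by omega
        rw [hmax, if_neg hcond]; ring
      · have h1 : j % 2 = 1 := Nat.odd_iff.mp ho
        have hpow : (-1 : ℝ) ^ (j + 1) = 1 := (ho.add_one).neg_one_pow
        rw [hpow]
        have hmax : max (1 * (x - q j)) 0 = 1 * (x - q j) :=
          max_eq_left (by linarith)
        have hcond : ((j % 2 = 1 ∧ j ≤ i) ∨ (j % 2 = 0 ∧ i < j)) := by omega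
        rw [hmax, if_pos hcond, hqj]; ring
    · -- i < j, so i + 1 ≤ j, x ≤ q (i+1) ≤ q j
      have hij : i + 1 ≤ j := by omega
      have hge : x ≤ q j := by
        refine le_trans hx2 ?_
        rw [hqj, hq (i + 1)]
        gcongr
      rcases Nat.even_or_odd j with he | ho
      · have h0 : j % 2 = 0 := Nat.even_iff.mp he
        have hpow : (-1 : ℝ) ^ (j + 1) = -1 := (he.add_one).neg_one_pow
        rw [hpow]
        have hmax : max (-1 * (x - q j)) 0 = -1 * (x - q j) :=
          max_eq_left (by linarith)
        have hcond : ((j % 2 = 1 ∧ j ≤ i) ∨ (j % 2 = 0 ∧ i < j)) := by omega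
        rw [hmax, if_pos hcond, hqj]; ring
      · have h1 : j % 2 = 1 := Nat.odd_iff.mp ho
        have hpow : (-1 : ℝ) ^ (j + 1) = 1 := (ho.add_one).neg_one_pow
        rw [hpow]
        have hmax : max (1 * (x - q j)) 0 = 0 :=
          max_eq_right (by linarith)
        have hcond : ¬ ((j % 2 = 1 ∧ j ≤ i) ∨ (j % 2 = 0 ∧ i < j)) := by omega
        rw [hmax, if_neg hcond]; ring
  rw [Finset.sum_congr rfl termwise, core_sum n hne i hi x]
  field_simp
  ring
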